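/- If the transition kernel T is irreducible (for all states s, s' there exists n ≥ 1 with T^n(s)(s') > 0) and aperiodic (for every state s there exists N such that T^n(s)(s) > 0 for all n ≥ N), then T has exactly one stationary PMF. -/

import Mathlib

open scoped ENNReal

namespace MC

/-- The `n`-step transition kernel, 0-indexed: `nstep T 0 = T¹ = T` and
`nstep T (n+1) = T^{n+2}`, where `T^{n+1}(s) = (T^n(s)).bind T`. -/
noncomputable def nstep {S : Type*} (T : S → PMF S) : ℕ → S → PMF S
  | 0 => T
  | n + 1 => fun s => (nstep T n s).bind T

/-- A PMF `ν` on `S` is stationary for the kernel `T` if `Σ_s ν(s)·T(s)(s') = ν(s')`. -/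
def Stationary {S : Type*} (T : S → PMF S) (ν : PMF S) : Prop :=
  ∀ s' : S, ∑' s : S, ν s * T s s' = ν s'

/-- `T` is irreducible: for all states `s, s'` there is `n ≥ 1` with `T^n(s)(s') > 0`. -/
def Irreducible {S : Type*} (T : S → PMF S) : Prop :=
  ∀ s s' : S, ∃ n : ℕ, 0 < nstep T n s s'

/-- `T` is aperiodic: for every state `s` there is `N` with `T^n(s)(s) > 0` for all
`n ≥ 1` with `n ≥ N`. -/
def Aperiodic {S : Type*} (T : S → PMF S) : Prop :=
  ∀ s : S, ∃ N : ℕ, ∀ n : ℕ, N ≤ n → 0 < nstep T n s s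

section Aux
set_option linter.unusedSectionVars false
variable {S : Type*} [Fintype S]



lemma nstep_ne_top (T : S → PMF S) (n : ℕ) (s s' : S) : nstep T n s s' ≠ ⊤ :=
  PMF.apply_ne_top _ _

lemma nstep_succ_apply (T : S → PMF S) (n : ℕ) (s s' : S) :
    nstep T (n+1) s s' = ∑ u, nstep T n s u * T u s' := by
  simp [nstep, PMF.bind_apply, tsum_fintype]

lemma chapman (T : S → PMF S) (a b : ℕ) (s s' : S) :
    nstep T (a + b + 1) s s' = ∑ u, nstep T a s u * nstep T b u s' := by
  induction b generalizing s' with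
  | zero => simpa [nstep] using nstep_succ_apply T a s s'
  | succ b ih =>
      have h : a + (b+1) + 1 = (a + b + 1) + 1 := by ring
      rw [h, nstep_succ_apply]
      calc ∑ w, nstep T (a+b+1) s w * T w s'
          = ∑ w, (∑ u, nstep T a s u * nstep T b u w) * T w s' := by
            simp only [ih]
        _ = ∑ u, nstep T a s u * ∑ w, nstep T b u w * T w s' := by
            simp only [Finset.sum_mul, Finset.mul_sum, mul_assoc]
            rw [Finset.sum_comm]
        _ = ∑ u, nstep T (a) s u * nstep T (b+1) u s' := by
            simp [nstep_succ_apply]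

lemma exists_uniform_pos [Nonempty S] (T : S → PMF S) (hirr : Irreducible T)
    (haper : Aperiodic T) : ∃ m : ℕ, ∀ s s', 0 < nstep T m s s' := by
  choose n hn using hirr
  choose N hN using haper
  refine ⟨(Finset.univ.sup fun p : S × S => n p.1 p.2 + N p.2) + 1, fun s s' => ?_⟩
  set M := Finset.univ.sup fun p : S × S => n p.1 p.2 + N p.2 with hM
  have hle : n s s' + N s' ≤ M := Finset.le_sup (f := fun p : S × S => n p.1 p.2 + N p.2)
    (Finset.mem_univ (s, s'))
  have hb : M + 1 = n s s' + (M - n s s' - N s' + N s') + 1 := by omega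
  rw [hb, chapman]
  have hterm : 0 < nstep T (n s s') s s' * nstep T (M - n s s' - N s' + N s') s' s' :=
    ENNReal.mul_pos (hn s s').ne' (hN s' _ (by omega)).ne'
  exact lt_of_lt_of_le hterm (Finset.single_le_sum
    (f := fun u => nstep T (n s s') s u * nstep T (M - n s s' - N s' + N s') u s')
    (fun u _ => zero_le) (Finset.mem_univ s'))

lemma stationary_nstep (T : S → PMF S) (ν : PMF S) (hν : Stationary T ν) (n : ℕ) (s' : S) :
    ∑ s, ν s * nstep T n s s' = ν s' := by
  induction n generalizing s' with
  | zero => simpa [nstep, tsum_fintype] using hν s'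
  | succ n ih =>
      calc ∑ s, ν s * nstep T (n+1) s s'
          = ∑ s, ν s * ∑ u, nstep T n s u * T u s' := by simp only [nstep_succ_apply]
        _ = ∑ u, (∑ s, ν s * nstep T n s u) * T u s' := by
            simp only [Finset.mul_sum, Finset.sum_mul, mul_assoc]
            rw [Finset.sum_comm]
        _ = ∑ u, ν u * T u s' := by simp only [ih]
        _ = ν s' := by simpa [tsum_fintype] using hν s'

lemma contract [Nonempty S] (Q : S → S → ℝ) (hpos : ∀ s s', 0 < Q s s')
    (hrow : ∀ s, ∑ s', Q s s' = 1) :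
    ∃ K : ℝ, 0 ≤ K ∧ K < 1 ∧ ∀ f : S → ℝ, (∑ s, f s) = 0 →
      ∑ s', |∑ s, f s * Q s s'| ≤ K * ∑ s, |f s| := by
  have hne : (Finset.univ : Finset (S × S)).Nonempty := Finset.univ_nonempty
  set δ := Finset.univ.inf' hne (fun p : S × S => Q p.1 p.2) with hδ
  have hδpos : 0 < δ := by
    rw [hδ, Finset.lt_inf'_iff]
    exact fun p _ => hpos p.1 p.2
  have hδle : ∀ s s', δ ≤ Q s s' := fun s s' =>
    Finset.inf'_le _ (Finset.mem_univ (s, s'))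
  have hcard : (Fintype.card S : ℝ) * δ ≤ 1 := by
    have s0 : S := Classical.arbitrary S
    calc (Fintype.card S : ℝ) * δ = ∑ _s' : S, δ := by
          rw [Finset.sum_const, Finset.card_univ, nsmul_eq_mul]
      _ ≤ ∑ s', Q s0 s' := Finset.sum_le_sum fun s' _ => hδle s0 s'
      _ = 1 := hrow s0
  have hcpos : 0 < (Fintype.card S : ℝ) * δ :=
    mul_pos (by exact_mod_cast Fintype.card_pos) hδpos
  refine ⟨1 - (Fintype.card S : ℝ) * δ, by linarith, by linarith, fun f hf => ?_⟩
  have key : ∀ s', ∑ s, f s * Q s s' = ∑ s, f s * (Q s s' - δ) := by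
    intro s'
    simp [mul_sub, Finset.sum_sub_distrib, ← Finset.sum_mul, hf]
  calc ∑ s', |∑ s, f s * Q s s'|
      = ∑ s', |∑ s, f s * (Q s s' - δ)| := by simp only [key]
    _ ≤ ∑ s', ∑ s, |f s| * (Q s s' - δ) := by
        refine Finset.sum_le_sum fun s' _ => ?_
        refine (Finset.abs_sum_le_sum_abs _ _).trans (le_of_eq ?_)
        refine Finset.sum_congr rfl fun s _ => ?_
        rw [abs_mul, abs_of_nonneg (sub_nonneg.2 (hδle s s'))]
    _ = ∑ s, |f s| * (1 - (Fintype.card S : ℝ) * δ) := by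
        rw [Finset.sum_comm]
        refine Finset.sum_congr rfl fun s _ => ?_
        rw [← Finset.mul_sum, Finset.sum_sub_distrib, hrow, Finset.sum_const,
          Finset.card_univ, nsmul_eq_mul]
    _ = (1 - (Fintype.card S : ℝ) * δ) * ∑ s, |f s| := by
        rw [← Finset.sum_mul, mul_comm]

lemma chapman_real (T : S → PMF S) (a b : ℕ) (s s' : S) :
    (nstep T (a + b + 1) s s').toReal
      = ∑ u, (nstep T a s u).toReal * (nstep T b u s').toReal := by
  rw [chapman, ENNReal.toReal_sum
    (fun u _ => ENNReal.mul_ne_top (nstep_ne_top T a s u) (nstep_ne_top T b u s'))]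
  exact Finset.sum_congr rfl fun u _ => ENNReal.toReal_mul

lemma nstep_row_sum (T : S → PMF S) (n : ℕ) (s : S) :
    ∑ s', (nstep T n s s').toReal = 1 := by
  have h1 : ∑' s', nstep T n s s' = 1 := (nstep T n s).tsum_coe
  rw [tsum_fintype] at h1
  have h2 := congrArg ENNReal.toReal h1
  rwa [ENNReal.toReal_sum (fun s' _ => nstep_ne_top T n s s'), ENNReal.toReal_one] at h2



lemma fixed_point_unique [Nonempty S] (Q : S → S → ℝ) (hpos : ∀ s s', 0 < Q s s')
    (hrow : ∀ s, ∑ s', Q s s' = 1) (u v : S → ℝ) (hsum : ∑ s, u s = ∑ s, v s)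
    (hu : ∀ s', ∑ s, u s * Q s s' = u s') (hv : ∀ s', ∑ s, v s * Q s s' = v s') :
    u = v := by
  obtain ⟨K, hK0, hK1, hK⟩ := contract Q hpos hrow
  set f : S → ℝ := fun s => u s - v s with hf
  have hf0 : ∑ s, f s = 0 := by
    rw [hf]; rw [Finset.sum_sub_distrib, hsum, sub_self]
  have hfix : ∀ s', ∑ s, f s * Q s s' = f s' := by
    intro s'
    simp only [hf, sub_mul, Finset.sum_sub_distrib, hu, hv]
  have hmain := hK f hf0
  simp only [hfix] at hmain
  have hFnn : (0:ℝ) ≤ ∑ s, |f s| := Finset.sum_nonneg fun s _ => abs_nonneg _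
  have hF0 : ∑ s, |f s| = 0 := by nlinarith
  funext s
  have := (Finset.sum_eq_zero_iff_of_nonneg (fun s _ => abs_nonneg (f s))).1 hF0 s
    (Finset.mem_univ s)
  have : f s = 0 := abs_eq_zero.1 this
  simpa [hf, sub_eq_zero] using this

theorem main [Nonempty S] (T : S → PMF S) (m : ℕ) (hm : ∀ s s', 0 < nstep T m s s')
    (stationary_nstep : ∀ (ν : PMF S) (_ : ∀ s' : S, ∑' s : S, ν s * T s s' = ν s')
      (n : ℕ) (s' : S), ∑ s, ν s * nstep T n s s' = ν s') :
    ∃! ν : PMF S, ∀ s' : S, ∑' s : S, ν s * T s s' = ν s' := by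
  classical
  set Pm : S → S → ℝ := fun s s' => (nstep T m s s').toReal with hPmdef
  have hPpos : ∀ s s', 0 < Pm s s' := fun s s' =>
    ENNReal.toReal_pos (hm s s').ne' (nstep_ne_top T m s s')
  have hProw : ∀ s, ∑ s', Pm s s' = 1 := fun s => nstep_row_sum T m s
  obtain ⟨K, hK0, hK1, hK⟩ := contract Pm hPpos hProw
  obtain ⟨s0⟩ := ‹Nonempty S›
  set v : ℕ → S → ℝ := fun n s' => (nstep T (n * (m+1) + m) s0 s').toReal with hvdef
  have hrec : ∀ n s', v (n+1) s' = ∑ s, v n s * Pm s s' := by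
    intro n s'
    have hidx : (n+1) * (m+1) + m = (n * (m+1) + m) + m + 1 := by ring
    simp only [hvdef, hidx]
    exact chapman_real T _ m s0 s'
  have hvsum : ∀ n, ∑ s, v n s = 1 := fun n => nstep_row_sum T _ s0
  set D : ℕ → ℝ := fun n => ∑ s, |v (n+1) s - v n s| with hDdef
  have hDnn : ∀ n, 0 ≤ D n := fun n => Finset.sum_nonneg fun s _ => abs_nonneg _
  have hcontr : ∀ n, D (n+1) ≤ K * D n := by
    intro n
    have hf0 : ∑ s, (v (n+1) s - v n s) = 0 := by
      rw [Finset.sum_sub_distrib, hvsum, hvsum, sub_self]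
    have h := hK (fun s => v (n+1) s - v n s) hf0
    have heq : ∀ s', ∑ s, (v (n+1) s - v n s) * Pm s s' = v (n+2) s' - v (n+1) s' := by
      intro s'
      simp only [sub_mul, Finset.sum_sub_distrib, ← hrec]
    simpa only [heq] using h
  have hgeom : ∀ n, D n ≤ D 0 * K ^ n := by
    intro n
    induction n with
    | zero => simp
    | succ n ih =>
        calc D (n+1) ≤ K * D n := hcontr n
          _ ≤ K * (D 0 * K ^ n) := by nlinarith
          _ = D 0 * K ^ (n+1) := by ring
  have hcauchy : ∀ s : S, CauchySeq (fun n => v n s) := by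
    intro s
    refine cauchySeq_of_le_geometric K (D 0) hK1 fun n => ?_
    rw [Real.dist_eq]
    calc |v n s - v (n+1) s| = |v (n+1) s - v n s| := abs_sub_comm _ _
      _ ≤ D n := Finset.single_le_sum (f := fun s => |v (n+1) s - v n s|)
          (fun s _ => abs_nonneg _) (Finset.mem_univ s)
      _ ≤ D 0 * K ^ n := hgeom n
  have hlim : ∀ s : S, ∃ l : ℝ, Filter.Tendsto (fun n => v n s) Filter.atTop (nhds l) :=
    fun s => cauchySeq_tendsto_of_complete (hcauchy s)
  choose w hw using hlim
  have hw0 : ∀ s, 0 ≤ w s := fun s =>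
    ge_of_tendsto' (hw s) fun n => ENNReal.toReal_nonneg
  have hwsum : ∑ s, w s = 1 := by
    have h1 : Filter.Tendsto (fun n => ∑ s, v n s) Filter.atTop (nhds (∑ s, w s)) :=
      tendsto_finset_sum _ fun s _ => hw s
    have h2 : Filter.Tendsto (fun n => ∑ s, v n s) Filter.atTop (nhds 1) := by
      simp only [hvsum]; exact tendsto_const_nhds
    exact tendsto_nhds_unique h1 h2
  have hwfix : ∀ s', ∑ s, w s * Pm s s' = w s' := by
    intro s'
    have h1 : Filter.Tendsto (fun n => v (n+1) s') Filter.atTop (nhds (w s')) :=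
      (hw s').comp (Filter.tendsto_add_atTop_nat 1)
    have h2 : Filter.Tendsto (fun n => ∑ s, v n s * Pm s s') Filter.atTop
        (nhds (∑ s, w s * Pm s s')) :=
      tendsto_finset_sum _ fun s _ => (hw s).mul_const _
    have h3 : (fun n => v (n+1) s') = fun n => ∑ s, v n s * Pm s s' :=
      funext fun n => hrec n s'
    rw [h3] at h1
    exact tendsto_nhds_unique h2 h1
  -- one-step matrix
  set A : S → S → ℝ := fun s s' => (T s s').toReal with hAdef
  have hArow : ∀ s, ∑ s', A s s' = 1 := fun s => nstep_row_sum T 0 s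
  have hcomm : ∀ t s', ∑ u, A t u * Pm u s' = ∑ u, Pm t u * A u s' := by
    intro t s'
    have e1 := chapman_real T 0 m t s'
    have e2 := chapman_real T m 0 t s'
    have hidx : 0 + m + 1 = m + 0 + 1 := by ring
    rw [hidx] at e1
    have : nstep T 0 = T := rfl
    rw [this] at e1 e2
    exact e1.symm.trans e2
  set w1 : S → ℝ := fun s' => ∑ s, w s * A s s' with hw1def
  have hw1sum : ∑ s', w1 s' = 1 := by
    rw [hw1def]
    rw [Finset.sum_comm]
    calc ∑ s, ∑ s', w s * A s s' = ∑ s, w s * ∑ s', A s s' := by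
          simp [Finset.mul_sum]
      _ = 1 := by simp only [hArow, mul_one]; exact hwsum
  have hw1fix : ∀ s', ∑ s, w1 s * Pm s s' = w1 s' := by
    intro s'
    calc ∑ s, w1 s * Pm s s'
        = ∑ s, (∑ t, w t * A t s) * Pm s s' := rfl
      _ = ∑ t, w t * ∑ s, A t s * Pm s s' := by
          simp only [Finset.sum_mul, Finset.mul_sum, mul_assoc]
          rw [Finset.sum_comm]
      _ = ∑ t, w t * ∑ s, Pm t s * A s s' := by simp only [hcomm]
      _ = ∑ s, (∑ t, w t * Pm t s) * A s s' := by
          simp only [Finset.sum_mul, Finset.mul_sum, mul_assoc]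
          rw [Finset.sum_comm]
      _ = ∑ s, w s * A s s' := by simp only [hwfix]
      _ = w1 s' := rfl
  have hweq : w1 = w :=
    fixed_point_unique Pm hPpos hProw w1 w (by rw [hw1sum, hwsum]) hw1fix hwfix
  -- build the PMF
  have hofsum : ∑ s, ENNReal.ofReal (w s) = 1 := by
    rw [← ENNReal.ofReal_sum_of_nonneg (fun s _ => hw0 s), hwsum, ENNReal.ofReal_one]
  set π : PMF S := ⟨fun s => ENNReal.ofReal (w s), by
    have h := hasSum_fintype (fun s => ENNReal.ofReal (w s))
    rwa [hofsum] at h⟩ with hπdef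
  have hπ : ∀ s, π s = ENNReal.ofReal (w s) := fun s => rfl
  have hstat : ∀ s' : S, ∑' s : S, π s * T s s' = π s' := by
    intro s'
    rw [tsum_fintype]
    refine (ENNReal.toReal_eq_toReal_iff' ?_ ?_).1 ?_
    · exact ENNReal.sum_ne_top.2 fun s _ =>
        ENNReal.mul_ne_top ENNReal.ofReal_ne_top (PMF.apply_ne_top _ _)
    · exact ENNReal.ofReal_ne_top
    · simp only [hπ]
      rw [ENNReal.toReal_sum (fun s _ =>
        ENNReal.mul_ne_top ENNReal.ofReal_ne_top (PMF.apply_ne_top _ _))]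
      have hL : ∑ s, (ENNReal.ofReal (w s) * T s s').toReal = ∑ s, w s * A s s' := by
        refine Finset.sum_congr rfl fun s _ => ?_
        rw [ENNReal.toReal_mul, ENNReal.toReal_ofReal (hw0 s)]
      rw [hL, ENNReal.toReal_ofReal (hw0 s')]
      exact congrFun hweq s'
  refine ⟨π, hstat, fun ν hν => ?_⟩
  have hfixν : ∀ s', ∑ s, (ν s).toReal * Pm s s' = (ν s').toReal := by
    intro s'
    have h := stationary_nstep ν hν m s'
    have h2 := congrArg ENNReal.toReal h
    rw [ENNReal.toReal_sum (fun s _ =>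
      ENNReal.mul_ne_top (PMF.apply_ne_top _ _) (nstep_ne_top T m s s'))] at h2
    simp only [ENNReal.toReal_mul] at h2
    exact h2
  have hsumν : ∑ s, (ν s).toReal = 1 := by
    have h1 := ν.tsum_coe
    rw [tsum_fintype] at h1
    have h2 := congrArg ENNReal.toReal h1
    rwa [ENNReal.toReal_sum (fun s _ => PMF.apply_ne_top _ _), ENNReal.toReal_one] at h2
  have hνw : (fun s => (ν s).toReal) = w :=
    fixed_point_unique Pm hPpos hProw _ w (by rw [hsumν, hwsum]) hfixν hwfix
  ext s
  rw [hπ s, ← congrFun hνw s, ENNReal.ofReal_toReal (PMF.apply_ne_top _ _)]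

end Aux

/-- an irreducible and aperiodic kernel on a finite state space has
exactly one stationary PMF. -/
theorem unique_stationary_of_irreducible_aperiodic {S : Type*} [Fintype S] [Nonempty S]
    (T : S → PMF S) (hirr : Irreducible T) (haper : Aperiodic T) :
    ∃! ν : PMF S, Stationary T ν := by
  obtain ⟨m, hm⟩ := exists_uniform_pos T hirr haper
  exact main T m hm (fun ν hν n s' => stationary_nstep T ν hν n s')


end MC
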